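/- arXiv:2101.09346 — 2 statements merged into one kernel-verified Lean document; each statement's English description precedes it below -/
import Mathlib

section
/- Consequently, for x, y ∈ St(d,r), ‖P_{T_x}(x − y) − (x − y)‖_F ≤ (1/2)‖x‖₂ · ‖x − y‖_F², where ‖x‖₂ = 1; hence ‖P_{T_x}(x−y) − (x−y)‖_F ≤ (1/2)‖x−y‖_F². -/
open Matrix BigOperators Finset

noncomputable def fnorm {d r : ℕ} (A : Matrix (Fin d) (Fin r) ℝ) : ℝ :=
  Real.sqrt (∑ i, ∑ j, (A i j) ^ 2)

def ip {d r : ℕ} (A B : Matrix (Fin d) (Fin r) ℝ) : ℝ :=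
  ∑ i, ∑ j, A i j * B i j

def Stiefel (d r : ℕ) : Set (Matrix (Fin d) (Fin r) ℝ) :=
  {x | xᵀ * x = 1}

lemma fnorm_nonneg {d r : ℕ} (A : Matrix (Fin d) (Fin r) ℝ) : 0 ≤ fnorm A :=
  Real.sqrt_nonneg _

lemma fnorm_sq {d r : ℕ} (A : Matrix (Fin d) (Fin r) ℝ) :
    fnorm A ^ 2 = ∑ i, ∑ j, (A i j) ^ 2 :=
  Real.sq_sqrt (by positivity)

lemma sum_sq_eq_trace {d r : ℕ} (A : Matrix (Fin d) (Fin r) ℝ) :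
    ∑ i, ∑ j, (A i j) ^ 2 = (Aᵀ * A).trace := by
  simp only [Matrix.trace, Matrix.diag, Matrix.mul_apply, Matrix.transpose_apply]
  rw [Finset.sum_comm]
  simp [sq]

lemma fnorm_mul_iso {d r : ℕ} (x : Matrix (Fin d) (Fin r) ℝ) (hx : xᵀ * x = 1)
    (M : Matrix (Fin r) (Fin r) ℝ) : fnorm (x * M) = fnorm M := by
  unfold fnorm
  congr 1
  rw [sum_sq_eq_trace, sum_sq_eq_trace]
  congr 1
  rw [Matrix.transpose_mul, Matrix.mul_assoc, ← Matrix.mul_assoc xᵀ, hx, Matrix.one_mul]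

lemma fnorm_gram_le {d r : ℕ} (A : Matrix (Fin d) (Fin r) ℝ) :
    fnorm (Aᵀ * A) ≤ fnorm A ^ 2 := by
  rw [fnorm_sq]
  unfold fnorm
  have h : ∑ i, ∑ j, ((Aᵀ * A) i j) ^ 2 ≤ (∑ i, ∑ j, (A i j) ^ 2) ^ 2 := by
    have hc : ∀ i : Fin r, ∀ j : Fin r, ((Aᵀ * A) i j) ^ 2 ≤
        (∑ k, (A k i) ^ 2) * (∑ k, (A k j) ^ 2) := by
      intro i j
      simp only [Matrix.mul_apply, Matrix.transpose_apply]
      exact Finset.sum_mul_sq_le_sq_mul_sq _ _ _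
    calc ∑ i, ∑ j, ((Aᵀ * A) i j) ^ 2
        ≤ ∑ i, ∑ j, (∑ k, (A k i) ^ 2) * (∑ k, (A k j) ^ 2) := by
          apply Finset.sum_le_sum; intro i _
          apply Finset.sum_le_sum; intro j _
          exact hc i j
      _ = (∑ i : Fin r, ∑ k, (A k i) ^ 2) ^ 2 := by
          rw [sq, Finset.sum_mul_sum]
      _ = (∑ i, ∑ j, (A i j) ^ 2) ^ 2 := by rw [Finset.sum_comm]
  calc Real.sqrt (∑ i, ∑ j, ((Aᵀ * A) i j) ^ 2)
      ≤ Real.sqrt ((∑ i, ∑ j, (A i j) ^ 2) ^ 2) := Real.sqrt_le_sqrt h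
    _ = ∑ i, ∑ j, (A i j) ^ 2 := Real.sqrt_sq (by positivity)

theorem stmt6 {d r : ℕ} (x y : Matrix (Fin d) (Fin r) ℝ)
    (hx : x ∈ Stiefel d r) (hy : y ∈ Stiefel d r) :
    fnorm (((x - y) - ((1 : ℝ) / 2) • (x * (xᵀ * (x - y) + (x - y)ᵀ * x))) - (x - y))
      ≤ (1 / 2) * fnorm (x - y) ^ 2 := by
  have hx' : xᵀ * x = 1 := hx
  have hy' : yᵀ * y = 1 := hy
  have key : xᵀ * (x - y) + (x - y)ᵀ * x = (x - y)ᵀ * (x - y) := by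
    simp only [Matrix.transpose_sub, Matrix.mul_sub, Matrix.sub_mul, hx', hy']
    abel
  have heq : ((x - y) - ((1 : ℝ) / 2) • (x * (xᵀ * (x - y) + (x - y)ᵀ * x))) - (x - y)
      = -(((1 : ℝ) / 2) • (x * ((x - y)ᵀ * (x - y)))) := by
    rw [key]; abel
  rw [heq]
  have hneg : ∀ (B : Matrix (Fin d) (Fin r) ℝ), fnorm (-B) = fnorm B := by
    intro B; unfold fnorm; simp
  have hsmul : fnorm (((1 : ℝ) / 2) • (x * ((x - y)ᵀ * (x - y))))
      = (1 / 2) * fnorm (x * ((x - y)ᵀ * (x - y))) := by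
    unfold fnorm
    have : ∀ i j, ((((1 : ℝ) / 2) • (x * ((x - y)ᵀ * (x - y)))) i j) ^ 2
        = (1 / 2 : ℝ) ^ 2 * ((x * ((x - y)ᵀ * (x - y))) i j) ^ 2 := by
      intro i j; simp [Matrix.smul_apply, mul_pow]
    simp_rw [this, ← Finset.mul_sum]
    rw [Real.sqrt_mul (by positivity), Real.sqrt_sq (by norm_num : (0:ℝ) ≤ 1/2)]
  rw [hneg, hsmul, fnorm_mul_iso x hx']
  have := fnorm_gram_le (x - y)
  linarith
end

section
/- Let W ∈ ℝ^{N×N} be symmetric doubly stochastic with nonnegative entries, φ(x) := (1/4)∑_{i,j} W_{ij}‖x_i − x_j‖_F² for x = (x_1,...,x_N) ∈ St(d,r)^N, and grad φ the Riemannian gradient (blockwise projection of the Euclidean gradient onto tangent spaces). Then for all x, y ∈ St(d,r)^N: ⟨grad φ(x), y − x⟩ = ⟨∇φ(x), y − x⟩ + (1/4)∑_i ⟨∑_j W_{ij}(x_i − x_j)ᵀ(x_i − x_j), (y_i − x_i)ᵀ(y_i − x_i)⟩ ≥ ⟨∇φ(x), y − x⟩. -/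
open Matrix BigOperators Finset

lemma ip_eq_trace {d r : ℕ} (A B : Matrix (Fin d) (Fin r) ℝ) :
    ip A B = (Aᵀ * B).trace := by
  simp only [ip, Matrix.trace, Matrix.diag, Matrix.mul_apply, Matrix.transpose_apply]
  rw [Finset.sum_comm]

lemma ip_sub_left {d r : ℕ} (A B C : Matrix (Fin d) (Fin r) ℝ) :
    ip (A - B) C = ip A C - ip B C := by
  simp [ip_eq_trace, Matrix.transpose_sub, Matrix.sub_mul]

lemma ip_smul_left {d r : ℕ} (c : ℝ) (A B : Matrix (Fin d) (Fin r) ℝ) :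
    ip (c • A) B = c * ip A B := by
  simp [ip, Finset.mul_sum, mul_assoc]

lemma ip_sum_left {d r n : ℕ} (f : Fin n → Matrix (Fin d) (Fin r) ℝ)
    (B : Matrix (Fin d) (Fin r) ℝ) :
    ip (∑ j, f j) B = ∑ j, ip (f j) B := by
  simp [ip_eq_trace, Matrix.transpose_sum, Matrix.sum_mul, Matrix.trace_sum]

lemma ip_self_nonneg {d r : ℕ} (A : Matrix (Fin d) (Fin r) ℝ) : 0 ≤ ip A A := by
  apply Finset.sum_nonneg; intro i _
  apply Finset.sum_nonneg; intro j _
  exact mul_self_nonneg _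

lemma ip_gram_nonneg {d r : ℕ} (A B : Matrix (Fin d) (Fin r) ℝ) :
    0 ≤ ip (Aᵀ * A) (Bᵀ * B) := by
  have h : ip (Aᵀ * A) (Bᵀ * B) = ip (A * Bᵀ) (A * Bᵀ) := by
    rw [ip_eq_trace, ip_eq_trace, Matrix.transpose_mul, Matrix.transpose_transpose,
        Matrix.transpose_mul, Matrix.transpose_transpose]
    rw [← Matrix.mul_assoc, Matrix.trace_mul_cycle]
    simp only [Matrix.mul_assoc]
  rw [h]; exact ip_self_nonneg _

lemma gram_expand {d r : ℕ} (u v : Matrix (Fin d) (Fin r) ℝ)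
    (hu : uᵀ * u = 1) (hv : vᵀ * v = 1) :
    (u - v)ᵀ * (u - v) = (1 + 1) - uᵀ * v - vᵀ * u := by
  rw [Matrix.transpose_sub, Matrix.sub_mul, Matrix.mul_sub, Matrix.mul_sub, hu, hv]
  abel

lemma key_block {d r : ℕ} (x y e : Matrix (Fin d) (Fin r) ℝ)
    (hx : xᵀ * x = 1) (hy : yᵀ * y = 1) (M : Matrix (Fin r) (Fin r) ℝ)
    (hM : Mᵀ = M) (hMe : xᵀ * e + eᵀ * x = M) :
    ip (e - ((1 : ℝ) / 2) • (x * (xᵀ * e + eᵀ * x))) (y - x)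
      = ip e (y - x) + (1 / 4) * ip M ((y - x)ᵀ * (y - x)) := by
  have h1 : ip (x * M) (y - x) = (M * (xᵀ * y)).trace - M.trace := by
    rw [ip_eq_trace, Matrix.transpose_mul, hM, Matrix.mul_assoc]
    have hxy : xᵀ * (y - x) = xᵀ * y - 1 := by rw [Matrix.mul_sub, hx]
    rw [hxy, Matrix.mul_sub, Matrix.trace_sub, Matrix.mul_one]
  have hyx : (M * (yᵀ * x)).trace = (M * (xᵀ * y)).trace := by
    rw [← Matrix.trace_transpose (M * (yᵀ * x)), Matrix.transpose_mul, Matrix.transpose_mul,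
        Matrix.transpose_transpose, hM, Matrix.trace_mul_comm]
  have h2 : ip M ((y - x)ᵀ * (y - x))
      = 2 * M.trace - 2 * (M * (xᵀ * y)).trace := by
    rw [ip_eq_trace, hM, gram_expand y x hy hx]
    rw [Matrix.mul_sub, Matrix.mul_sub, Matrix.mul_add, Matrix.mul_one,
        Matrix.trace_sub, Matrix.trace_sub, Matrix.trace_add, hyx]
    ring
  rw [hMe, ip_sub_left, ip_smul_left, h1, h2]
  ring

theorem stmt7 {N d r : ℕ} (W : Matrix (Fin N) (Fin N) ℝ)
    (hsymm : W.IsSymm) (hnn : ∀ i j, 0 ≤ W i j) (hrow : ∀ i, ∑ j, W i j = 1)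
    (x y : Fin N → Matrix (Fin d) (Fin r) ℝ)
    (hx : ∀ i, x i ∈ Stiefel d r) (hy : ∀ i, y i ∈ Stiefel d r)
    (egrad : Fin N → Matrix (Fin d) (Fin r) ℝ)
    (hegrad : ∀ i, egrad i = x i - ∑ j, W i j • x j)
    (rgrad : Fin N → Matrix (Fin d) (Fin r) ℝ)
    (hrgrad : ∀ i, rgrad i =
      egrad i - ((1 : ℝ) / 2) • (x i * ((x i)ᵀ * egrad i + (egrad i)ᵀ * x i))) :
    (∑ i, ip (rgrad i) (y i - x i) =
        ∑ i, ip (egrad i) (y i - x i) +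
          (1 / 4) * ∑ i, ip (∑ j, W i j • ((x i - x j)ᵀ * (x i - x j)))
            ((y i - x i)ᵀ * (y i - x i))) ∧
      ∑ i, ip (egrad i) (y i - x i) ≤ ∑ i, ip (rgrad i) (y i - x i) := by
  have hx' : ∀ i, (x i)ᵀ * x i = 1 := hx
  have hy' : ∀ i, (y i)ᵀ * y i = 1 := hy
  set M : Fin N → Matrix (Fin r) (Fin r) ℝ :=
    fun i => ∑ j, W i j • ((x i - x j)ᵀ * (x i - x j)) with hMdef
  have hMsymm : ∀ i, (M i)ᵀ = M i := by
    intro i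
    simp only [hMdef, Matrix.transpose_sum, Matrix.transpose_smul, Matrix.transpose_mul,
      Matrix.transpose_transpose]
  have hMe : ∀ i, (x i)ᵀ * egrad i + (egrad i)ᵀ * x i = M i := by
    intro i
    rw [hegrad i]
    have hrhs : M i = (1 + 1) - ∑ j, W i j • ((x i)ᵀ * x j)
        - ∑ j, W i j • ((x j)ᵀ * x i) := by
      simp only [hMdef]
      have : ∀ j ∈ Finset.univ, W i j • ((x i - x j)ᵀ * (x i - x j))
          = W i j • ((1 + 1) : Matrix (Fin r) (Fin r) ℝ)
            - W i j • ((x i)ᵀ * x j) - W i j • ((x j)ᵀ * x i) := by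
        intro j _
        rw [gram_expand (x i) (x j) (hx' i) (hx' j), smul_sub, smul_sub]
      rw [Finset.sum_congr rfl this, Finset.sum_sub_distrib, Finset.sum_sub_distrib,
        ← Finset.sum_smul, hrow i, one_smul]
    rw [hrhs]
    rw [Matrix.mul_sub, Matrix.transpose_sub, Matrix.sub_mul, hx' i, Matrix.transpose_sum]
    simp only [Matrix.mul_sum, Matrix.sum_mul, Matrix.mul_smul, Matrix.smul_mul,
      Matrix.transpose_smul]
    abel
  have hkey : ∀ i, ip (rgrad i) (y i - x i)
      = ip (egrad i) (y i - x i) + (1 / 4) * ip (M i) ((y i - x i)ᵀ * (y i - x i)) := by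
    intro i
    rw [hrgrad i]
    exact key_block (x i) (y i) (egrad i) (hx' i) (hy' i) (M i) (hMsymm i) (hMe i)
  have hmain : ∑ i, ip (rgrad i) (y i - x i) =
      ∑ i, ip (egrad i) (y i - x i) +
        (1 / 4) * ∑ i, ip (M i) ((y i - x i)ᵀ * (y i - x i)) := by
    rw [Finset.sum_congr rfl (fun i _ => hkey i), Finset.sum_add_distrib, Finset.mul_sum]
  have hpos : 0 ≤ ∑ i, ip (M i) ((y i - x i)ᵀ * (y i - x i)) := by
    apply Finset.sum_nonneg
    intro i _
    rw [hMdef]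
    rw [ip_sum_left]
    apply Finset.sum_nonneg
    intro j _
    rw [ip_smul_left]
    exact mul_nonneg (hnn i j) (ip_gram_nonneg _ _)
  exact ⟨hmain, by rw [hmain]; nlinarith⟩
end
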